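/- Let H, K be Hilbert spaces, T ∈ B(H,K) a generalized Weyl operator (closed range with dim ker T = dim ker T*), and F ∈ B(H,K) a finite rank operator such that Im(T+F) is closed. Then T + F is a generalized Weyl operator. -/

import Mathlib

open Submodule

local notation "⟪" x ", " y "⟫" => @inner ℂ _ _ x y

universe u

section HelpersA
variable {E G : Type*} [NormedAddCommGroup E] [InnerProductSpace ℂ E]
  [NormedAddCommGroup G] [InnerProductSpace ℂ G]

lemma aux_iso_of_hb {ι ι' : Type*} [CompleteSpace E] [CompleteSpace G]
    (b : HilbertBasis ι ℂ E) (c : HilbertBasis ι' ℂ G) (e : ι ≃ ι') :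
    Nonempty (E ≃ₗᵢ[ℂ] G) := by
  have horth : Orthonormal ℂ (⇑b ∘ ⇑e.symm) := b.orthonormal.comp _ e.symm.injective
  have hsp : ⊤ ≤ (span ℂ (Set.range (⇑b ∘ ⇑e.symm))).topologicalClosure := by
    rw [Set.range_comp, e.symm.surjective.range_eq, Set.image_univ, b.dense_span]
  exact ⟨(HilbertBasis.mk horth hsp).repr.trans c.repr.symm⟩

lemma aux_iso_of_finrank_eq [FiniteDimensional ℂ E] [FiniteDimensional ℂ G]
    (h : Module.finrank ℂ E = Module.finrank ℂ G) : Nonempty (E ≃ₗᵢ[ℂ] G) := by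
  have r1 := (stdOrthonormalBasis ℂ E).repr
  have r2 := (stdOrthonormalBasis ℂ G).repr
  rw [← h] at r2
  exact ⟨r1.trans r2.symm⟩

end HelpersA

lemma aux_absorb {E : Type u} [NormedAddCommGroup E] [InnerProductSpace ℂ E] [CompleteSpace E]
    (V : Submodule ℂ E) (hVc : IsClosed (V : Set E))
    (hq : FiniteDimensional ℂ ↥Vᗮ) (hinf : ¬ FiniteDimensional ℂ ↥V) :
    Nonempty (↥V ≃ₗᵢ[ℂ] E) := by
  haveI : CompleteSpace ↥V := hVc.completeSpace_coe
  obtain ⟨w, b, hb⟩ := exists_hilbertBasis ℂ ↥V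
  have hwinf : Infinite w := by
    rw [Set.infinite_coe_iff]
    intro hfin
    apply hinf
    have hd := b.dense_span
    rw [hb, Subtype.range_coe] at hd
    have hsp : FiniteDimensional ℂ (span ℂ w : Submodule ℂ ↥V) :=
      FiniteDimensional.span_of_finite ℂ hfin
    have hcl : (span ℂ w).topologicalClosure = span ℂ w :=
      IsClosed.submodule_topologicalClosure_eq (Submodule.closed_of_finiteDimensional _)
    rw [hcl] at hd
    exact Module.finite_def.mpr (hd ▸ Submodule.fg_span hfin)
  haveI := hq
  let m := Module.finrank ℂ ↥Vᗮ
  let onb := stdOrthonormalBasis ℂ ↥Vᗮ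
  let v : w ⊕ ULift.{u} (Fin m) → E :=
    Sum.elim (fun i => (b i : E)) (fun j => ((onb j.down : ↥Vᗮ) : E))
  have horth : Orthonormal ℂ v := by
    constructor
    · rintro (i | j)
      · show ‖((b i : ↥V) : E)‖ = 1
        rw [Submodule.norm_coe]
        exact b.orthonormal.1 i
      · show ‖((onb j.down : ↥Vᗮ) : E)‖ = 1
        rw [Submodule.norm_coe]
        exact onb.orthonormal.1 j.down
    · rintro (i | j) (i' | j') hne
      · have hii : i ≠ i' := by simpa using hne
        show ⟪((b i : ↥V) : E), ((b i' : ↥V) : E)⟫ = 0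
        rw [← Submodule.coe_inner]
        exact b.orthonormal.2 hii
      · exact Submodule.inner_right_of_mem_orthogonal (b i).2 (onb j'.down).2
      · exact Submodule.inner_left_of_mem_orthogonal (b i').2 (onb j.down).2
      · have hjj : j.down ≠ j'.down := fun hc => hne (congrArg Sum.inr (ULift.ext _ _ hc))
        show ⟪((onb j.down : ↥Vᗮ) : E), ((onb j'.down : ↥Vᗮ) : E)⟫ = 0
        rw [← Submodule.coe_inner]
        exact onb.orthonormal.2 hjj
  have hsp : (span ℂ (Set.range v))ᗮ = ⊥ := by
    rw [Submodule.eq_bot_iff]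
    intro x hx
    have hxv : ∀ i, ⟪v i, x⟫ = 0 := fun i =>
      hx (v i) (Submodule.subset_span (Set.mem_range_self i))
    have key : ∀ y : ↥V, ⟪x, (y : E)⟫ = 0 := by
      intro y
      set g : ↥V →L[ℂ] ℂ := (innerSL ℂ x).comp V.subtypeL with hg
      have hker : span ℂ (Set.range ⇑b) ≤ LinearMap.ker (g : ↥V →ₗ[ℂ] ℂ) := by
        rw [Submodule.span_le]
        rintro _ ⟨i, rfl⟩
        have h0 : ⟪((b i : ↥V) : E), x⟫ = 0 := hxv (Sum.inl i)
        show g (b i) = 0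
        show ⟪x, ((b i : ↥V) : E)⟫ = 0
        exact inner_eq_zero_symm.mp h0
      have hker' : (span ℂ (Set.range ⇑b)).topologicalClosure ≤ LinearMap.ker (g : ↥V →ₗ[ℂ] ℂ) :=
        Submodule.topologicalClosure_minimal _ hker (ContinuousLinearMap.isClosed_ker g)
      rw [b.dense_span] at hker'
      have h1 : g y = 0 := hker' (Submodule.mem_top (x := y))
      exact h1
    have hxV : x ∈ Vᗮ := by
      rw [Submodule.mem_orthogonal]
      intro u hu
      exact inner_eq_zero_symm.mp (key ⟨u, hu⟩)
    have hxVp : x ∈ Vᗮᗮ := by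
      rw [Submodule.mem_orthogonal]
      intro u hu
      have hs : span ℂ (Set.range fun j : Fin m => ((onb j : ↥Vᗮ) : E))
          ≤ LinearMap.ker (innerSL ℂ x : E →ₗ[ℂ] ℂ) := by
        rw [Submodule.span_le]
        rintro _ ⟨j, rfl⟩
        have h0 : ⟪((onb j : ↥Vᗮ) : E), x⟫ = 0 := hxv (Sum.inr ⟨j⟩)
        show innerSL ℂ x ((onb j : ↥Vᗮ) : E) = 0
        show ⟪x, ((onb j : ↥Vᗮ) : E)⟫ = 0
        exact inner_eq_zero_symm.mp h0
      have hu' : u ∈ span ℂ (Set.range fun j : Fin m => ((onb j : ↥Vᗮ) : E)) := by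
        have h1 : (⟨u, hu⟩ : ↥Vᗮ) ∈ (⊤ : Submodule ℂ ↥Vᗮ) := trivial
        rw [← onb.toBasis.span_eq] at h1
        have h2 := Submodule.mem_map_of_mem (f := Vᗮ.subtype) h1
        rw [Submodule.map_span, ← Set.range_comp] at h2
        simpa [Function.comp_def] using h2
      have h3 := hs hu'
      have h4 : ⟪x, u⟫ = 0 := h3
      exact inner_eq_zero_symm.mp h4
    exact (Submodule.orthogonal_disjoint Vᗮ).le_bot (Submodule.mem_inf.mpr ⟨hxV, hxVp⟩)
  let bigB : HilbertBasis (w ⊕ ULift.{u} (Fin m)) ℂ E :=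
    HilbertBasis.mkOfOrthogonalEqBot horth hsp
  have hcard : Cardinal.mk (w ⊕ ULift.{u} (Fin m)) = Cardinal.mk w := by
    simp only [Cardinal.mk_sum, Cardinal.mk_uLift, Cardinal.mk_fintype,
      Cardinal.lift_id, Cardinal.lift_natCast]
    exact Cardinal.add_eq_left (Cardinal.aleph0_le_mk w)
      ((Cardinal.nat_lt_aleph0 _).le.trans (Cardinal.aleph0_le_mk w))
  obtain ⟨e⟩ := Cardinal.eq.mp hcard
  have horth2 : Orthonormal ℂ (⇑bigB ∘ ⇑e.symm) := bigB.orthonormal.comp _ e.symm.injective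
  have hsp2 : ⊤ ≤ (span ℂ (Set.range (⇑bigB ∘ ⇑e.symm))).topologicalClosure := by
    rw [Set.range_comp, e.symm.surjective.range_eq, Set.image_univ, bigB.dense_span]
  exact ⟨b.repr.trans (HilbertBasis.mk horth2 hsp2).repr.symm⟩


section Part2
variable {E G : Type*} [NormedAddCommGroup E] [InnerProductSpace ℂ E]
  [NormedAddCommGroup G] [InnerProductSpace ℂ G]

lemma aux_comap_iso {P Q : Submodule ℂ E} (h : Q ≤ P) :
    Nonempty (↥(Q.comap P.subtype) ≃ₗᵢ[ℂ] ↥Q) := by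
  exact ⟨{ Submodule.comapSubtypeEquivOfLe h with norm_map' := fun x => rfl }⟩

lemma aux_ker_comp (P : Submodule ℂ E) (F : E →L[ℂ] G) :
    LinearMap.ker ((F.comp P.subtypeL : ↥P →L[ℂ] G) : ↥P →ₗ[ℂ] G) = (P ⊓ LinearMap.ker (F : E →ₗ[ℂ] G)).comap P.subtype := by
  ext x
  simp [Submodule.mem_comap, Submodule.mem_inf, Submodule.coe_mem]

lemma aux_ker_proj (P R : Submodule ℂ E) [HasOrthogonalProjection R] :
    LinearMap.ker (((orthogonalProjection R).comp P.subtypeL : ↥P →L[ℂ] ↥R) : ↥P →ₗ[ℂ] ↥R)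
      = (P ⊓ Rᗮ).comap P.subtype := by
  ext x
  simp only [LinearMap.mem_ker, ContinuousLinearMap.coe_coe, ContinuousLinearMap.coe_comp', Function.comp_apply,
    Submodule.coe_subtypeL', Submodule.coe_subtype, Submodule.mem_comap, Submodule.mem_inf,
    Submodule.coe_mem, true_and]
  rw [← Submodule.orthogonalProjectionOnto_eq_zero_iff]

lemma aux_fd_of_sub_quot' {V : Type*} [AddCommGroup V] [Module ℂ V] (S : Submodule ℂ V)
    (h1 : FiniteDimensional ℂ S) (h2 : FiniteDimensional ℂ (V ⧸ S)) :
    FiniteDimensional ℂ V := by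
  have := (isNoetherian_iff_submodule_quotient S).mpr
    ⟨IsNoetherian.iff_fg.2 h1, IsNoetherian.iff_fg.2 h2⟩
  exact IsNoetherian.iff_fg.1 this

lemma aux_quot_fd (P : Submodule ℂ E) (g : ↥P →L[ℂ] G)
    (hrg : FiniteDimensional ℂ ↥(LinearMap.range (g : ↥P →ₗ[ℂ] G))) :
    FiniteDimensional ℂ (↥P ⧸ LinearMap.ker (g : ↥P →ₗ[ℂ] G)) := by
  haveI : FiniteDimensional ℂ ↥(LinearMap.range (g : ↥P →ₗ[ℂ] G)) := hrg
  exact (LinearMap.quotKerEquivRange (g : ↥P →ₗ[ℂ] G)).symm.finiteDimensional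

lemma aux_sub_fin (P Q : Submodule ℂ E) (g : ↥P →L[ℂ] G)
    (hker : LinearMap.ker (g : ↥P →ₗ[ℂ] G) = (P ⊓ Q).comap P.subtype)
    (hrg : FiniteDimensional ℂ ↥(LinearMap.range (g : ↥P →ₗ[ℂ] G)))
    (hPQ : FiniteDimensional ℂ ↥(P ⊓ Q)) : FiniteDimensional ℂ ↥P := by
  refine aux_fd_of_sub_quot' (LinearMap.ker (g : ↥P →ₗ[ℂ] G)) ?_ (aux_quot_fd P g hrg)
  rw [hker]
  haveI := hPQ
  exact (Submodule.comapSubtypeEquivOfLe (inf_le_left : P ⊓ Q ≤ P)).symm.finiteDimensional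

end Part2

section Part3
universe v
variable {E : Type u} {G : Type v} [NormedAddCommGroup E] [InnerProductSpace ℂ E]
  [NormedAddCommGroup G] [InnerProductSpace ℂ G]

lemma aux_inf_iso [CompleteSpace E]
    (P Q : Submodule ℂ E) (hP : IsClosed (P : Set E)) (hQ : IsClosed (Q : Set E))
    (g : ↥P →L[ℂ] G) (hker : LinearMap.ker (g : ↥P →ₗ[ℂ] G) = (P ⊓ Q).comap P.subtype)
    (hg : FiniteDimensional ℂ ↥(LinearMap.range (g : ↥P →ₗ[ℂ] G)))
    (hinf : ¬ FiniteDimensional ℂ ↥P) :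
    Nonempty (↥(P ⊓ Q) ≃ₗᵢ[ℂ] ↥P) := by
  haveI : CompleteSpace ↥P := hP.completeSpace_coe
  set V : Submodule ℂ ↥P := (P ⊓ Q).comap P.subtype with hV
  have hVc : IsClosed (V : Set ↥P) := by
    have h1 : IsClosed ((P ⊓ Q : Submodule ℂ E) : Set E) := by
      rw [Submodule.coe_inf]; exact hP.inter hQ
    exact h1.preimage continuous_subtype_val
  have hquot : FiniteDimensional ℂ (↥P ⧸ V) := by
    rw [← hker]
    exact aux_quot_fd P g hg
  haveI : CompleteSpace ↥V := hVc.completeSpace_coe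
  have hcompl : IsCompl V Vᗮ := Submodule.isCompl_orthogonal_of_hasOrthogonalProjection
  haveI hVo : FiniteDimensional ℂ ↥Vᗮ := by
    haveI := hquot
    exact (Submodule.quotientEquivOfIsCompl V Vᗮ hcompl).finiteDimensional
  have hVinf : ¬ FiniteDimensional ℂ ↥V := fun h => hinf (aux_fd_of_sub_quot' V h hquot)
  obtain ⟨i1⟩ := aux_absorb V hVc hVo hVinf
  obtain ⟨i2⟩ := aux_comap_iso (inf_le_left : P ⊓ Q ≤ P)
  exact ⟨i2.symm.trans i1⟩

end Part3

section Part4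
variable {H K : Type*} [NormedAddCommGroup H] [InnerProductSpace ℂ H] [CompleteSpace H]
  [NormedAddCommGroup K] [InnerProductSpace ℂ K] [CompleteSpace K]

lemma aux_index (S : H →L[ℂ] K) (H₀ : Submodule ℂ H)
    (fd1 : FiniteDimensional ℂ ↥(LinearMap.ker (S : H →ₗ[ℂ] K)))
    (fd2 : FiniteDimensional ℂ (H ⧸ H₀))
    (fd3 : FiniteDimensional ℂ (K ⧸ LinearMap.range (S : H →ₗ[ℂ] K))) :
    Module.finrank ℂ ↥(LinearMap.ker (S : H →ₗ[ℂ] K))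
        + Module.finrank ℂ (K ⧸ (H₀.map (S : H →ₗ[ℂ] K)))
      = Module.finrank ℂ ↥(LinearMap.ker (S : H →ₗ[ℂ] K) ⊓ H₀)
        + Module.finrank ℂ (H ⧸ H₀) + Module.finrank ℂ (K ⧸ LinearMap.range (S : H →ₗ[ℂ] K)) := by
  haveI := fd1; haveI := fd2; haveI := fd3
  set M : Submodule ℂ K := H₀.map (S : H →ₗ[ℂ] K) with hM
  set P : Submodule ℂ H := LinearMap.ker (S : H →ₗ[ℂ] K) with hP
  set φ : ↥P →ₗ[ℂ] H ⧸ H₀ := H₀.mkQ.comp P.subtype with hφ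
  have hkerφ : LinearMap.ker φ = (P ⊓ H₀).comap P.subtype := by
    ext x
    simp [hφ, LinearMap.mem_ker, Submodule.mem_comap, Submodule.mem_inf,
      Submodule.Quotient.mk_eq_zero, Submodule.coe_mem]
  have e1 : Module.finrank ℂ ↥(LinearMap.ker φ) = Module.finrank ℂ ↥(P ⊓ H₀) := by
    rw [hkerφ]
    exact (Submodule.comapSubtypeEquivOfLe (inf_le_left : P ⊓ H₀ ≤ P)).finrank_eq
  have eq1 := LinearMap.finrank_range_add_finrank_ker φ
  have hH₀le : H₀ ≤ Submodule.comap (S : H →ₗ[ℂ] K) M :=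
    fun x hx => Submodule.mem_map_of_mem hx
  set Θ : (H ⧸ H₀) →ₗ[ℂ] (K ⧸ M) := Submodule.mapQ H₀ M (S : H →ₗ[ℂ] K) hH₀le with hΘ
  have hkerΘ : LinearMap.ker Θ = LinearMap.range φ := by
    ext z
    constructor
    · intro hz
      obtain ⟨x, rfl⟩ := Submodule.Quotient.mk_surjective H₀ z
      rw [LinearMap.mem_ker, hΘ, Submodule.mapQ_apply, Submodule.Quotient.mk_eq_zero] at hz
      obtain ⟨y, hy, hxy⟩ := hz
      refine ⟨⟨x - y, ?_⟩, ?_⟩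
      · show x - y ∈ LinearMap.ker (S : H →ₗ[ℂ] K)
        rw [LinearMap.mem_ker, ContinuousLinearMap.coe_coe, map_sub, show S y = S x from hxy, sub_self]
      · show H₀.mkQ (x - y) = Submodule.Quotient.mk x
        rw [map_sub]
        have : H₀.mkQ y = 0 := (Submodule.Quotient.mk_eq_zero H₀).mpr hy
        rw [this, sub_zero]
        rfl
    · rintro ⟨⟨x, hx⟩, rfl⟩
      have hx0 : S x = 0 := hx
      show Θ (H₀.mkQ x) = 0
      rw [hΘ, Submodule.mkQ_apply, Submodule.mapQ_apply, Submodule.Quotient.mk_eq_zero]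
      show S x ∈ M
      rw [hx0]
      exact M.zero_mem
  have hMle : M ≤ LinearMap.range (S : H →ₗ[ℂ] K) := by
    rintro y ⟨x, _, rfl⟩
    exact ⟨x, rfl⟩
  set π : (K ⧸ M) →ₗ[ℂ] (K ⧸ LinearMap.range (S : H →ₗ[ℂ] K)) :=
    Submodule.mapQ M (LinearMap.range (S : H →ₗ[ℂ] K)) LinearMap.id hMle with hπ
  have hπsurj : Function.Surjective π := by
    intro z
    obtain ⟨y, rfl⟩ := Submodule.Quotient.mk_surjective _ z
    exact ⟨Submodule.Quotient.mk y, by rw [hπ, Submodule.mapQ_apply]; rfl⟩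
  have hkerπ : LinearMap.ker π = LinearMap.range Θ := by
    ext z
    constructor
    · intro hz
      obtain ⟨y, rfl⟩ := Submodule.Quotient.mk_surjective M z
      rw [LinearMap.mem_ker, hπ, Submodule.mapQ_apply, Submodule.Quotient.mk_eq_zero] at hz
      obtain ⟨x, rfl⟩ := hz
      exact ⟨Submodule.Quotient.mk x, by rw [hΘ, Submodule.mapQ_apply]⟩
    · rintro ⟨zz, rfl⟩
      obtain ⟨x, rfl⟩ := Submodule.Quotient.mk_surjective H₀ zz
      rw [LinearMap.mem_ker, hΘ, Submodule.mapQ_apply, hπ, Submodule.mapQ_apply,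
        Submodule.Quotient.mk_eq_zero]
      exact ⟨x, rfl⟩
  haveI fdΘr : FiniteDimensional ℂ ↥(LinearMap.range Θ) := inferInstance
  haveI fdKM : FiniteDimensional ℂ (K ⧸ M) := by
    refine aux_fd_of_sub_quot' (LinearMap.ker π) ?_ ?_
    · rw [hkerπ]; exact fdΘr
    · exact (LinearMap.quotKerEquivRange π).symm.finiteDimensional
  have eq3 := LinearMap.finrank_range_add_finrank_ker π
  have hr : Module.finrank ℂ ↥(LinearMap.range π)
      = Module.finrank ℂ (K ⧸ LinearMap.range (S : H →ₗ[ℂ] K)) := by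
    rw [LinearMap.range_eq_top.mpr hπsurj]
    exact finrank_top ℂ _
  rw [hkerπ, hr] at eq3
  have eq2 := LinearMap.finrank_range_add_finrank_ker Θ
  rw [hkerΘ] at eq2
  rw [e1] at eq1
  omega

end Part4

set_option maxHeartbeats 1000000 in
/-- Let `T ∈ B(H,K)` be a generalized Weyl operator between Hilbert spaces
(closed range and `ker T` isometrically isomorphic to `(range T)ᗮ = ker T*`), and let `F` be a
finite-rank operator such that `Im (T + F)` is closed. Then `T + F` is a generalized Weyl
operator. -/
theorem generalizedWeyl_add_finiteRank
    {H K : Type*} [NormedAddCommGroup H] [InnerProductSpace ℂ H] [CompleteSpace H]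
    [NormedAddCommGroup K] [InnerProductSpace ℂ K] [CompleteSpace K]
    (T : H →L[ℂ] K)
    (hTcl : IsClosed (Set.range T))
    (hTW : Nonempty (↥(LinearMap.ker (T : H →ₗ[ℂ] K)) ≃ₗᵢ[ℂ] ↥((LinearMap.range (T : H →ₗ[ℂ] K))ᗮ)))
    (F : H →L[ℂ] K) (hF : FiniteDimensional ℂ ↥(LinearMap.range (F : H →ₗ[ℂ] K)))
    (hTF : IsClosed (Set.range (T + F))) :
    IsClosed (Set.range (T + F)) ∧
      Nonempty (↥(LinearMap.ker ((T + F : H →L[ℂ] K) : H →ₗ[ℂ] K)) ≃ₗᵢ[ℂ] ↥((LinearMap.range ((T + F : H →L[ℂ] K) : H →ₗ[ℂ] K))ᗮ)) := by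
  refine ⟨hTF, ?_⟩
  classical
  set S : H →L[ℂ] K := T + F with hSdef
  haveI hRfd : FiniteDimensional ℂ ↥(LinearMap.range (F : H →ₗ[ℂ] K)) := hF
  haveI : CompleteSpace ↥(LinearMap.range (F : H →ₗ[ℂ] K)) := FiniteDimensional.complete ℂ _
  have hkT : IsClosed ((LinearMap.ker (T : H →ₗ[ℂ] K) : Submodule ℂ H) : Set H) :=
    ContinuousLinearMap.isClosed_ker T
  have hkTF : IsClosed ((LinearMap.ker (S : H →ₗ[ℂ] K) : Submodule ℂ H) : Set H) :=
    ContinuousLinearMap.isClosed_ker S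
  have hkF : IsClosed ((LinearMap.ker (F : H →ₗ[ℂ] K) : Submodule ℂ H) : Set H) :=
    ContinuousLinearMap.isClosed_ker F
  have hoT : IsClosed (((LinearMap.range (T : H →ₗ[ℂ] K))ᗮ : Submodule ℂ K) : Set K) :=
    Submodule.isClosed_orthogonal _
  have hoTF : IsClosed (((LinearMap.range (S : H →ₗ[ℂ] K))ᗮ : Submodule ℂ K) : Set K) :=
    Submodule.isClosed_orthogonal _
  have hoF : IsClosed (((LinearMap.range (F : H →ₗ[ℂ] K))ᗮ : Submodule ℂ K) : Set K) :=
    Submodule.isClosed_orthogonal _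
  have hTcl' : IsClosed ((LinearMap.range (T : H →ₗ[ℂ] K) : Submodule ℂ K) : Set K) := by
    rw [LinearMap.coe_range]; exact hTcl
  have hTFcl' : IsClosed ((LinearMap.range (S : H →ₗ[ℂ] K) : Submodule ℂ K) : Set K) := by
    rw [LinearMap.coe_range]; exact hTF
  have ker_inf : LinearMap.ker (S : H →ₗ[ℂ] K) ⊓ LinearMap.ker (F : H →ₗ[ℂ] K)
      = LinearMap.ker (T : H →ₗ[ℂ] K) ⊓ LinearMap.ker (F : H →ₗ[ℂ] K) := by
    ext x
    rw [hSdef]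
    simp only [Submodule.mem_inf, LinearMap.mem_ker, ContinuousLinearMap.coe_coe, ContinuousLinearMap.add_apply]
    constructor
    · rintro ⟨h1, h2⟩; rw [h2, add_zero] at h1; exact ⟨h1, h2⟩
    · rintro ⟨h1, h2⟩
      refine ⟨?_, h2⟩
      rw [h1, h2, add_zero]
  have orth_inf : (LinearMap.range (S : H →ₗ[ℂ] K))ᗮ ⊓ (LinearMap.range (F : H →ₗ[ℂ] K))ᗮ
      = (LinearMap.range (T : H →ₗ[ℂ] K))ᗮ ⊓ (LinearMap.range (F : H →ₗ[ℂ] K))ᗮ := by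
    ext x
    simp only [Submodule.mem_inf, Submodule.mem_orthogonal]
    constructor
    · rintro ⟨h1, h2⟩
      refine ⟨fun u hu => ?_, h2⟩
      obtain ⟨y, rfl⟩ := hu
      have e1 := h1 (S y) ⟨y, rfl⟩
      have e2 := h2 (F y) ⟨y, rfl⟩
      rw [show (S y : K) = T y + F y from by rw [hSdef]; rfl, inner_add_left, e2, add_zero] at e1
      exact e1
    · rintro ⟨h1, h2⟩
      refine ⟨fun u hu => ?_, h2⟩
      obtain ⟨y, rfl⟩ := hu
      have e1 := h1 (T y) ⟨y, rfl⟩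
      have e2 := h2 (F y) ⟨y, rfl⟩
      show ⟪S y, x⟫ = 0
      rw [show (S y : K) = T y + F y from by rw [hSdef]; rfl, inner_add_left, e1, e2, add_zero]
  set gk1 : ↥(LinearMap.ker (T : H →ₗ[ℂ] K)) →L[ℂ] K := F.comp (LinearMap.ker (T : H →ₗ[ℂ] K)).subtypeL with hgk1d
  set gk2 : ↥(LinearMap.ker (S : H →ₗ[ℂ] K)) →L[ℂ] K :=
    F.comp (LinearMap.ker (S : H →ₗ[ℂ] K)).subtypeL with hgk2d
  set go1 : ↥((LinearMap.range (T : H →ₗ[ℂ] K))ᗮ) →L[ℂ] ↥(LinearMap.range (F : H →ₗ[ℂ] K)) :=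
    (orthogonalProjection (LinearMap.range (F : H →ₗ[ℂ] K))).comp ((LinearMap.range (T : H →ₗ[ℂ] K))ᗮ).subtypeL with hgo1d
  set go2 : ↥((LinearMap.range (S : H →ₗ[ℂ] K))ᗮ) →L[ℂ] ↥(LinearMap.range (F : H →ₗ[ℂ] K)) :=
    (orthogonalProjection (LinearMap.range (F : H →ₗ[ℂ] K))).comp
      ((LinearMap.range (S : H →ₗ[ℂ] K))ᗮ).subtypeL with hgo2d
  have hgk1 := aux_ker_comp (LinearMap.ker (T : H →ₗ[ℂ] K)) F
  have hgk2 := aux_ker_comp (LinearMap.ker (S : H →ₗ[ℂ] K)) F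
  have hgo1 := aux_ker_proj (LinearMap.range (T : H →ₗ[ℂ] K))ᗮ (LinearMap.range (F : H →ₗ[ℂ] K))
  have hgo2 := aux_ker_proj (LinearMap.range (S : H →ₗ[ℂ] K))ᗮ (LinearMap.range (F : H →ₗ[ℂ] K))
  have hgk1r : FiniteDimensional ℂ ↥(LinearMap.range (gk1 : ↥(LinearMap.ker (T : H →ₗ[ℂ] K)) →ₗ[ℂ] K)) := by
    refine Submodule.finiteDimensional_of_le (S₂ := LinearMap.range (F : H →ₗ[ℂ] K)) ?_
    rintro _ ⟨x, rfl⟩; exact ⟨↑x, rfl⟩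
  have hgk2r : FiniteDimensional ℂ ↥(LinearMap.range (gk2 : ↥(LinearMap.ker (S : H →ₗ[ℂ] K)) →ₗ[ℂ] K)) := by
    refine Submodule.finiteDimensional_of_le (S₂ := LinearMap.range (F : H →ₗ[ℂ] K)) ?_
    rintro _ ⟨x, rfl⟩; exact ⟨↑x, rfl⟩
  have hgo1r : FiniteDimensional ℂ ↥(LinearMap.range (go1 : ↥((LinearMap.range (T : H →ₗ[ℂ] K))ᗮ) →ₗ[ℂ] ↥(LinearMap.range (F : H →ₗ[ℂ] K)))) := inferInstance
  have hgo2r : FiniteDimensional ℂ ↥(LinearMap.range (go2 : ↥((LinearMap.range (S : H →ₗ[ℂ] K))ᗮ) →ₗ[ℂ] ↥(LinearMap.range (F : H →ₗ[ℂ] K)))) := inferInstance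
  by_cases hfin : FiniteDimensional ℂ ↥(LinearMap.ker (T : H →ₗ[ℂ] K))
  · -- finite-dimensional (Fredholm) case
    obtain ⟨W⟩ := hTW
    haveI := hfin
    haveI fdoT : FiniteDimensional ℂ ↥((LinearMap.range (T : H →ₗ[ℂ] K))ᗮ) :=
      W.toLinearEquiv.finiteDimensional
    haveI : CompleteSpace ↥(LinearMap.range (T : H →ₗ[ℂ] K)) := hTcl'.completeSpace_coe
    haveI : CompleteSpace ↥(LinearMap.range (S : H →ₗ[ℂ] K)) := hTFcl'.completeSpace_coe
    have hcT : IsCompl (LinearMap.range (T : H →ₗ[ℂ] K)) (LinearMap.range (T : H →ₗ[ℂ] K))ᗮ :=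
      Submodule.isCompl_orthogonal_of_hasOrthogonalProjection
    have hcTF : IsCompl (LinearMap.range (S : H →ₗ[ℂ] K)) (LinearMap.range (S : H →ₗ[ℂ] K))ᗮ :=
      Submodule.isCompl_orthogonal_of_hasOrthogonalProjection
    haveI fdqT : FiniteDimensional ℂ (K ⧸ LinearMap.range (T : H →ₗ[ℂ] K)) :=
      (Submodule.quotientEquivOfIsCompl _ _ hcT).symm.finiteDimensional
    haveI : FiniteDimensional ℂ ↥(LinearMap.range (F : H →ₗ[ℂ] K)) := hF
    haveI fdHq : FiniteDimensional ℂ (H ⧸ LinearMap.ker (F : H →ₗ[ℂ] K)) :=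
      (LinearMap.quotKerEquivRange (F : H →ₗ[ℂ] K)).symm.finiteDimensional
    haveI fdN : FiniteDimensional ℂ ↥(LinearMap.ker (T : H →ₗ[ℂ] K) ⊓ LinearMap.ker (F : H →ₗ[ℂ] K)) :=
      Submodule.finiteDimensional_of_le inf_le_left
    haveI fdkTF : FiniteDimensional ℂ ↥(LinearMap.ker (S : H →ₗ[ℂ] K)) := by
      refine aux_sub_fin _ (LinearMap.ker (F : H →ₗ[ℂ] K)) gk2 hgk2 hgk2r ?_
      rw [ker_inf]; exact fdN
    haveI fdoTF : FiniteDimensional ℂ ↥((LinearMap.range (S : H →ₗ[ℂ] K))ᗮ) := by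
      refine aux_sub_fin _ (LinearMap.range (F : H →ₗ[ℂ] K))ᗮ go2 hgo2 hgo2r ?_
      rw [orth_inf]
      exact Submodule.finiteDimensional_of_le inf_le_left
    haveI fdqTF : FiniteDimensional ℂ (K ⧸ LinearMap.range (S : H →ₗ[ℂ] K)) :=
      (Submodule.quotientEquivOfIsCompl _ _ hcTF).symm.finiteDimensional
    have eqT := aux_index T (LinearMap.ker (F : H →ₗ[ℂ] K)) hfin fdHq fdqT
    have eqTF := aux_index S (LinearMap.ker (F : H →ₗ[ℂ] K)) fdkTF fdHq fdqTF
    have hmap : (LinearMap.ker (F : H →ₗ[ℂ] K)).map (S : H →ₗ[ℂ] K)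
        = (LinearMap.ker (F : H →ₗ[ℂ] K)).map (T : H →ₗ[ℂ] K) := by
      ext y
      constructor
      · rintro ⟨x, hx, rfl⟩
        refine ⟨x, hx, ?_⟩
        have hx0 : F x = 0 := hx
        show T x = S x
        rw [hSdef, ContinuousLinearMap.add_apply, hx0, add_zero]
      · rintro ⟨x, hx, rfl⟩
        refine ⟨x, hx, ?_⟩
        have hx0 : F x = 0 := hx
        show S x = T x
        rw [hSdef, ContinuousLinearMap.add_apply, hx0, add_zero]
    rw [hmap, ker_inf] at eqTF
    have hWr : Module.finrank ℂ ↥(LinearMap.ker (T : H →ₗ[ℂ] K))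
        = Module.finrank ℂ ↥((LinearMap.range (T : H →ₗ[ℂ] K))ᗮ) := W.toLinearEquiv.finrank_eq
    have hqT : Module.finrank ℂ (K ⧸ LinearMap.range (T : H →ₗ[ℂ] K))
        = Module.finrank ℂ ↥((LinearMap.range (T : H →ₗ[ℂ] K))ᗮ) :=
      (Submodule.quotientEquivOfIsCompl _ _ hcT).finrank_eq
    have hqTF : Module.finrank ℂ (K ⧸ LinearMap.range (S : H →ₗ[ℂ] K))
        = Module.finrank ℂ ↥((LinearMap.range (S : H →ₗ[ℂ] K))ᗮ) :=
      (Submodule.quotientEquivOfIsCompl _ _ hcTF).finrank_eq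
    apply aux_iso_of_finrank_eq
    omega
  · -- infinite-dimensional case
    have hoTinf : ¬ FiniteDimensional ℂ ↥((LinearMap.range (T : H →ₗ[ℂ] K))ᗮ) := fun h => hfin (by
      haveI := h
      exact hTW.some.symm.toLinearEquiv.finiteDimensional)
    have n1 := aux_inf_iso (LinearMap.ker (T : H →ₗ[ℂ] K)) (LinearMap.ker (F : H →ₗ[ℂ] K)) hkT hkF gk1 hgk1 hgk1r hfin
    have hNinf : ¬ FiniteDimensional ℂ ↥(LinearMap.ker (T : H →ₗ[ℂ] K) ⊓ LinearMap.ker (F : H →ₗ[ℂ] K)) := fun h =>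
      hfin (by haveI := h; exact n1.some.toLinearEquiv.finiteDimensional)
    have hkTFinf : ¬ FiniteDimensional ℂ ↥(LinearMap.ker (S : H →ₗ[ℂ] K)) := fun h => hNinf (by
      haveI := h
      rw [← ker_inf]
      exact Submodule.finiteDimensional_of_le inf_le_left)
    have n2 := aux_inf_iso (LinearMap.ker (S : H →ₗ[ℂ] K)) (LinearMap.ker (F : H →ₗ[ℂ] K)) hkTF hkF gk2 hgk2
      hgk2r hkTFinf
    rw [ker_inf] at n2
    have n4 := aux_inf_iso (LinearMap.range (T : H →ₗ[ℂ] K))ᗮ (LinearMap.range (F : H →ₗ[ℂ] K))ᗮ hoT hoF go1 hgo1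
      hgo1r hoTinf
    have hMinf : ¬ FiniteDimensional ℂ
        ↥((LinearMap.range (T : H →ₗ[ℂ] K))ᗮ ⊓ (LinearMap.range (F : H →ₗ[ℂ] K))ᗮ) := fun h =>
      hoTinf (by haveI := h; exact n4.some.toLinearEquiv.finiteDimensional)
    have hoTFinf : ¬ FiniteDimensional ℂ ↥((LinearMap.range (S : H →ₗ[ℂ] K))ᗮ) := fun h => hMinf (by
      haveI := h
      rw [← orth_inf]
      exact Submodule.finiteDimensional_of_le inf_le_left)
    have n5 := aux_inf_iso (LinearMap.range (S : H →ₗ[ℂ] K))ᗮ (LinearMap.range (F : H →ₗ[ℂ] K))ᗮ hoTF hoF go2 hgo2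
      hgo2r hoTFinf
    rw [orth_inf] at n5
    obtain ⟨i1⟩ := n1
    obtain ⟨i2⟩ := n2
    obtain ⟨i4⟩ := n4
    obtain ⟨i5⟩ := n5
    obtain ⟨W⟩ := hTW
    exact ⟨i2.symm.trans (i1.trans (W.trans (i4.symm.trans i5)))⟩
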